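/- Let S be a finite subset of ℂ and let φ : S → S be a map such that for every z ∈ S, φ(z) ≠ z and |z − φ(z)| = min_{z' ∈ S \ {z}} |z − z'|. Then every element of S has at most 6 preimages under φ. -/

import Mathlib

open Real Complex

lemma re_mul_conj_eq (u v : ℂ) :
    (u * (starRingEnd ℂ) v).re = ‖u‖ * ‖v‖ * Real.cos (u.arg - v.arg) := by
  have key : (Complex.exp (↑u.arg * Complex.I) *
      (starRingEnd ℂ) (Complex.exp (↑v.arg * Complex.I))).re = Real.cos (u.arg - v.arg) := by
    rw [← Complex.exp_conj]
    have h1 : (starRingEnd ℂ) (↑v.arg * Complex.I) = ↑(-v.arg) * Complex.I := by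
      simp [Complex.conj_I]
    rw [h1, ← Complex.exp_add]
    have h2 : (↑u.arg * Complex.I + ↑(-v.arg) * Complex.I) = ↑(u.arg - v.arg) * Complex.I := by
      push_cast; ring
    rw [h2, Complex.exp_ofReal_mul_I_re]
  conv_lhs => rw [← Complex.norm_mul_exp_arg_mul_I u, ← Complex.norm_mul_exp_arg_mul_I v]
  rw [map_mul, Complex.conj_ofReal]
  have h3 : (↑‖u‖ * Complex.exp (↑u.arg * Complex.I)) *
      (↑‖v‖ * (starRingEnd ℂ) (Complex.exp (↑v.arg * Complex.I))) =
      ((↑(‖u‖ * ‖v‖)) : ℂ) *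
      (Complex.exp (↑u.arg * Complex.I) * (starRingEnd ℂ) (Complex.exp (↑v.arg * Complex.I))) := by
    push_cast; ring
  rw [h3, Complex.re_ofReal_mul, key]

lemma cos_small (s : ℝ) (hs : |s| < 1) : 1/2 < Real.cos (s * (π/3)) := by
  have hpi := Real.pi_pos
  have h1 : Real.cos (s * (π/3)) = Real.cos (|s * (π/3)|) := (Real.cos_abs _).symm
  rw [h1, ← Real.cos_pi_div_three]
  apply Real.cos_lt_cos_of_nonneg_of_le_pi (abs_nonneg _) (by linarith)
  rw [abs_mul, abs_of_pos (by positivity : (0:ℝ) < π/3)]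
  nlinarith

lemma cos_bin (t₁ t₂ : ℝ) (h₁ : 0 < t₁) (h₁' : t₁ ≤ 6) (h₂ : 0 < t₂) (h₂' : t₂ ≤ 6)
    (h : ⌊t₁⌋₊ % 6 = ⌊t₂⌋₊ % 6) : 1/2 < Real.cos ((t₁ - t₂) * (π/3)) := by
  have hf₁ : (⌊t₁⌋₊ : ℝ) ≤ t₁ := Nat.floor_le h₁.le
  have hf₁' : t₁ < ⌊t₁⌋₊ + 1 := Nat.lt_floor_add_one t₁
  have hf₂ : (⌊t₂⌋₊ : ℝ) ≤ t₂ := Nat.floor_le h₂.le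
  have hf₂' : t₂ < ⌊t₂⌋₊ + 1 := Nat.lt_floor_add_one t₂
  have hb₁ : ⌊t₁⌋₊ ≤ 6 := by
    have := Nat.floor_le_floor h₁' (R := ℝ)
    simpa using this
  have hb₂ : ⌊t₂⌋₊ ≤ 6 := by
    have := Nat.floor_le_floor h₂' (R := ℝ)
    simpa using this
  rcases (by omega : ⌊t₁⌋₊ = ⌊t₂⌋₊ ∨ (⌊t₁⌋₊ = 6 ∧ ⌊t₂⌋₊ = 0) ∨ (⌊t₁⌋₊ = 0 ∧ ⌊t₂⌋₊ = 6)) with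
    heq | ⟨e1, e2⟩ | ⟨e1, e2⟩
  · apply cos_small
    rw [heq] at hf₁ hf₁'
    rw [abs_lt]; constructor <;> linarith
  · have ht₁ : t₁ = 6 := by rw [e1] at hf₁; push_cast at hf₁; linarith
    rw [e2] at hf₂'; push_cast at hf₂'
    have : (t₁ - t₂) * (π/3) = 2*π - t₂ * (π/3) := by rw [ht₁]; ring
    rw [this, Real.cos_two_pi_sub]
    exact cos_small t₂ (by rw [abs_lt]; constructor <;> linarith)
  · have ht₂ : t₂ = 6 := by rw [e2] at hf₂; push_cast at hf₂; linarith
    rw [e1] at hf₁'; push_cast at hf₁'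
    have : (t₁ - t₂) * (π/3) = -(2*π - t₁ * (π/3)) := by rw [ht₂]; ring
    rw [this, Real.cos_neg, Real.cos_two_pi_sub]
    exact cos_small t₁ (by rw [abs_lt]; constructor <;> linarith)

lemma key_contra (w z₁ z₂ : ℂ) (h₁ : z₁ ≠ w) (h₂ : z₂ ≠ w) (h₁₂ : z₁ ≠ z₂)
    (hord : ‖z₂ - w‖ ≤ ‖z₁ - w‖)
    (hbin : ⌊((z₁ - w).arg + π) * 3 / π⌋₊ % 6 = ⌊((z₂ - w).arg + π) * 3 / π⌋₊ % 6)
    (hm : ‖z₁ - w‖ ≤ ‖z₁ - z₂‖) : False := by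
  have hpi := Real.pi_pos
  set u := z₁ - w with hu
  set v := z₂ - w with hv
  have hu0 : u ≠ 0 := sub_ne_zero.2 h₁
  have hv0 : v ≠ 0 := sub_ne_zero.2 h₂
  have targ1 : -π < u.arg := Complex.neg_pi_lt_arg u
  have targ1' : u.arg ≤ π := Complex.arg_le_pi u
  have targ2 : -π < v.arg := Complex.neg_pi_lt_arg v
  have targ2' : v.arg ≤ π := Complex.arg_le_pi v
  set t₁ := (u.arg + π) * 3 / π with ht₁
  set t₂ := (v.arg + π) * 3 / π with ht₂
  have ht₁0 : 0 < t₁ := by apply div_pos (by nlinarith) hpi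
  have ht₂0 : 0 < t₂ := by apply div_pos (by nlinarith) hpi
  have ht₁6 : t₁ ≤ 6 := by rw [ht₁, div_le_iff₀ hpi]; nlinarith
  have ht₂6 : t₂ ≤ 6 := by rw [ht₂, div_le_iff₀ hpi]; nlinarith
  have harg : (t₁ - t₂) * (π/3) = u.arg - v.arg := by
    rw [ht₁, ht₂]; field_simp; ring
  have hcos : 1/2 < Real.cos (u.arg - v.arg) := by
    rw [← harg]; exact cos_bin t₁ t₂ ht₁0 ht₁6 ht₂0 ht₂6 hbin
  have habu : 0 < ‖u‖ := norm_pos_iff.mpr hu0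
  have habv : 0 < ‖v‖ := norm_pos_iff.mpr hv0
  have hre : ‖u‖ * ‖v‖ / 2 < (u * (starRingEnd ℂ) v).re := by
    rw [re_mul_conj_eq]
    have : ‖u‖ * ‖v‖ * (1/2) < ‖u‖ * ‖v‖ *
        Real.cos (u.arg - v.arg) := by
      apply mul_lt_mul_of_pos_left hcos (mul_pos habu habv)
    linarith
  have hnsq : Complex.normSq (u - v) = Complex.normSq u + Complex.normSq v -
      2 * (u * (starRingEnd ℂ) v).re := Complex.normSq_sub u v
  have hsq : ∀ x : ℂ, Complex.normSq x = ‖x‖ ^ 2 := fun x => (Complex.sq_norm x).symm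
  have hlt : ‖u - v‖ ^ 2 < ‖u‖ ^ 2 := by
    rw [← hsq, hnsq, hsq, hsq]
    nlinarith
  have huv : u - v = z₁ - z₂ := by rw [hu, hv]; ring
  rw [huv] at hlt
  nlinarith [norm_nonneg (z₁ - z₂), norm_nonneg u]

/-- If S ⊂ ℂ is finite and φ maps every z ∈ S to a nearest point of S distinct
from z, then every element of S has at most 6 preimages under φ. -/
theorem nearest_map_preimages_le_six (S : Finset ℂ) (φ : ℂ → ℂ)
    (hmem : ∀ z ∈ S, φ z ∈ S) (hne : ∀ z ∈ S, φ z ≠ z)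
    (hmin : ∀ z ∈ S, ∀ z' ∈ S, z' ≠ z → ‖z - φ z‖ ≤ ‖z - z'‖) :
    ∀ w ∈ S, (S.filter (fun z => φ z = w)).card ≤ 6 := by
  intro w hw
  by_contra hc
  push_neg at hc
  have hmaps : ∀ z ∈ S.filter (fun z => φ z = w),
      (⌊((z - w).arg + π) * 3 / π⌋₊ % 6) ∈ Finset.range 6 := by
    intro z _
    exact Finset.mem_range.2 (Nat.mod_lt _ (by norm_num))
  obtain ⟨z₁, hz₁, z₂, hz₂, hne12, heq⟩ :=
    Finset.exists_ne_map_eq_of_card_lt_of_maps_to (by simpa using hc) hmaps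
  simp only [Finset.mem_filter] at hz₁ hz₂
  have h₁w : z₁ ≠ w := fun h => hne z₁ hz₁.1 (hz₁.2.trans h.symm)
  have h₂w : z₂ ≠ w := fun h => hne z₂ hz₂.1 (hz₂.2.trans h.symm)
  have hm₁ : ‖z₁ - w‖ ≤ ‖z₁ - z₂‖ := by
    have := hmin z₁ hz₁.1 z₂ hz₂.1 (Ne.symm hne12)
    rwa [hz₁.2] at this
  have hm₂ : ‖z₂ - w‖ ≤ ‖z₂ - z₁‖ := by
    have := hmin z₂ hz₂.1 z₁ hz₁.1 hne12
    rwa [hz₂.2] at this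
  rcases le_total (‖z₂ - w‖) (‖z₁ - w‖) with hord | hord
  · exact key_contra w z₁ z₂ h₁w h₂w hne12 hord heq hm₁
  · exact key_contra w z₂ z₁ h₂w h₁w (Ne.symm hne12) hord heq.symm hm₂
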